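/- arXiv:1903.12619 — 2 statements merged into one kernel-verified Lean document; each statement's English description precedes it below -/
import Mathlib

section
/- Let G be a closed subgroup of O(n), acting on the unit sphere S^(n-1) of ℝ^n. Then diam(S^(n-1)/G) = π if and only if G fixes some non-zero vector of ℝ^n. Otherwise diam(S^(n-1)/G) ≤ π/2, with equality if and only if the representation of G on ℝ^n is reducible (i.e., ℝ^n has a G-invariant linear subspace other than {0} and ℝ^n). -/
open Real Set Matrix Finset

namespace SphereQuotAux

variable {n : ℕ}


lemma arccos_anti : Antitone Real.arccos := fun _ _ h =>
  sub_le_sub_left (Real.monotone_arcsin h) _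

lemma arccos_lt_pi_div_two {t : ℝ} (ht : 0 < t) : Real.arccos t < π / 2 := by
  have := Real.arcsin_pos.2 ht
  rw [Real.arccos]; linarith

lemma sum_sq_eq_dot (v : Fin n → ℝ) : (∑ i, v i ^ 2) = v ⬝ᵥ v := by
  simp [dotProduct, pow_two]

lemma dot_self_nonneg (v : Fin n → ℝ) : 0 ≤ v ⬝ᵥ v :=
  Finset.sum_nonneg fun i _ => mul_self_nonneg _

lemma continuous_dot₂ : Continuous fun p : (Fin n → ℝ) × (Fin n → ℝ) => p.1 ⬝ᵥ p.2 := by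
  unfold dotProduct
  exact continuous_finset_sum _ fun i _ =>
    ((continuous_apply i).comp continuous_fst).mul ((continuous_apply i).comp continuous_snd)

lemma continuous_dot_left (x : Fin n → ℝ) : Continuous fun v : Fin n → ℝ => x ⬝ᵥ v :=
  continuous_dot₂.comp (continuous_const.prodMk continuous_id)

lemma continuous_mulVec (M : Matrix (Fin n) (Fin n) ℝ) :
    Continuous fun v : Fin n → ℝ => M *ᵥ v := by
  have := LinearMap.continuous_of_finiteDimensional (Matrix.mulVecLin M)
  rwa [Matrix.coe_mulVecLin] at this



lemma orth_transpose_mul (g : Matrix.orthogonalGroup (Fin n) ℝ) :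
    (g : Matrix (Fin n) (Fin n) ℝ)ᵀ * (g : Matrix (Fin n) (Fin n) ℝ) = 1 := by
  have h := Matrix.UnitaryGroup.star_mul_self g
  rwa [Matrix.star_eq_conjTranspose, Matrix.conjTranspose_eq_transpose_of_trivial] at h

lemma orth_dot (g : Matrix.orthogonalGroup (Fin n) ℝ) (x y : Fin n → ℝ) :
    ((g : Matrix (Fin n) (Fin n) ℝ) *ᵥ x) ⬝ᵥ ((g : Matrix (Fin n) (Fin n) ℝ) *ᵥ y) = x ⬝ᵥ y := by
  rw [dotProduct_mulVec, ← Matrix.mulVec_transpose, Matrix.mulVec_mulVec,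
    orth_transpose_mul, Matrix.one_mulVec]

def sph (n : ℕ) : Set (Fin n → ℝ) := {v | v ⬝ᵥ v = 1}

lemma continuous_dot_self : Continuous fun v : Fin n → ℝ => v ⬝ᵥ v := by
  have : Continuous fun p : (Fin n → ℝ) × (Fin n → ℝ) => p.1 ⬝ᵥ p.2 := by
    unfold dotProduct
    exact continuous_finset_sum _ fun i _ =>
      ((continuous_apply i).comp continuous_fst).mul ((continuous_apply i).comp continuous_snd)
  exact this.comp (continuous_id.prodMk continuous_id)

lemma isClosed_sph : IsClosed (sph n) := isClosed_eq continuous_dot_self continuous_const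

lemma sph_bounded : sph n ⊆ Metric.closedBall 0 1 := by
  intro v hv
  rw [Metric.mem_closedBall, dist_zero_right]
  refine (pi_norm_le_iff_of_nonneg zero_le_one).2 fun i => ?_
  rw [Real.norm_eq_abs, abs_le_one_iff_mul_self_le_one]
  calc v i * v i ≤ ∑ j, v j * v j :=
        Finset.single_le_sum (fun j _ => mul_self_nonneg (v j)) (Finset.mem_univ i)
    _ = 1 := hv

lemma isCompact_of_subset_sph {S : Set (Fin n → ℝ)} (hcl : IsClosed S) (h : S ⊆ sph n) :
    IsCompact S :=
  Metric.isCompact_of_isClosed_isBounded hcl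
    ((Metric.isBounded_closedBall (x := (0 : Fin n → ℝ)) (r := 1)).subset (h.trans sph_bounded))

lemma sph_ne_zero {v : Fin n → ℝ} (hv : v ∈ sph n) : v ≠ 0 := by
  intro h
  rw [h] at hv
  simp [sph, dotProduct] at hv



lemma dite_sum_helper {M : Type*} [AddCommMonoid M] (t : Finset (Fin n → ℝ)) {N : ℕ}
    (h : t.card ≤ N) (f : (Fin n → ℝ) → M) :
    (∑ i : Fin N, if hi : (i : ℕ) < t.card then f ((t.equivFin.symm ⟨(i : ℕ), hi⟩ : t) : Fin n → ℝ)
      else 0) = ∑ y ∈ t, f y := by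
  classical
  set g : ℕ → M := fun m =>
    if hm : m < t.card then f ((t.equivFin.symm ⟨m, hm⟩ : t) : Fin n → ℝ) else 0 with hg
  have h1 : (∑ i : Fin N, if hi : (i : ℕ) < t.card then
      f ((t.equivFin.symm ⟨(i : ℕ), hi⟩ : t) : Fin n → ℝ) else 0) = ∑ i : Fin N, g (i : ℕ) := rfl
  rw [h1, Fin.sum_univ_eq_sum_range g N]
  rw [← Finset.sum_subset (Finset.range_subset_range.2 h) (fun x _ hx => by
    simp only [hg]
    rw [dif_neg (by simpa using hx)])]
  rw [← Fin.sum_univ_eq_sum_range g t.card]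
  have h2 : ∀ i : Fin t.card, g (i : ℕ) = f ((t.equivFin.symm i : t) : Fin n → ℝ) := by
    intro i
    simp only [hg]
    rw [dif_pos i.isLt]
  rw [Finset.sum_congr rfl fun i _ => h2 i]
  rw [Equiv.sum_comp t.equivFin.symm (fun y : t => f (y : Fin n → ℝ))]
  exact Finset.sum_coe_sort t f

lemma isCompact_convexHull_of_isCompact {S : Set (Fin n → ℝ)} (hS : IsCompact S) :
    IsCompact (convexHull ℝ S) := by
  classical
  rcases S.eq_empty_or_nonempty with rfl | ⟨q₀, hq₀⟩
  · simp
  set N := n + 1 with hN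
  set F : (Fin N → ℝ) × (Fin N → Fin n → ℝ) → (Fin n → ℝ) := fun p => ∑ i, p.1 i • p.2 i with hF
  have hf : Continuous F := by
    apply continuous_finset_sum
    intro i _
    exact ((continuous_apply i).comp continuous_fst).smul ((continuous_apply i).comp continuous_snd)
  have hK : IsCompact ((stdSimplex ℝ (Fin N)) ×ˢ (Set.univ.pi fun _ : Fin N => S)) :=
    (isCompact_stdSimplex _ _).prod (isCompact_univ_pi fun _ => hS)
  have himg : convexHull ℝ S = F '' ((stdSimplex ℝ (Fin N)) ×ˢ (Set.univ.pi fun _ : Fin N => S)) := by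
    apply Set.Subset.antisymm
    · intro x hx
      rw [convexHull_eq_union] at hx
      simp only [Set.mem_iUnion] at hx
      obtain ⟨t, hts, hai, hxt⟩ := hx
      have htne : t.Nonempty := by
        rcases t.eq_empty_or_nonempty with rfl | h
        · simp at hxt
        · exact h
      obtain ⟨y₀, hy₀t⟩ := htne
      have hcard : t.card ≤ N := by
        have h1 := hai.card_le_finrank_succ
        rw [Fintype.card_coe] at h1
        refine h1.trans ?_
        have h2 := Submodule.finrank_le (vectorSpan ℝ (Set.range (Subtype.val : t → (Fin n → ℝ))))
        rw [Module.finrank_fin_fun] at h2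
        omega
      rw [Finset.convexHull_eq] at hxt
      obtain ⟨w, hw0, hw1, hxw⟩ := hxt
      rw [Finset.centerMass_eq_of_sum_1 _ _ hw1] at hxw
      simp only [id] at hxw
      set z : Fin N → (Fin n → ℝ) := fun i =>
        if hi : (i : ℕ) < t.card then ((t.equivFin.symm ⟨(i : ℕ), hi⟩ : t) : Fin n → ℝ) else y₀
        with hz
      set ω : Fin N → ℝ := fun i =>
        if hi : (i : ℕ) < t.card then w ((t.equivFin.symm ⟨(i : ℕ), hi⟩ : t) : Fin n → ℝ) else 0
        with hω
      refine ⟨⟨ω, z⟩, ⟨?_, ?_⟩, ?_⟩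
      · constructor
        · intro i
          simp only [hω]
          split_ifs with hi
          · exact hw0 _ (Finset.coe_mem _)
          · exact le_refl 0
        · have : (∑ i, ω i) = ∑ y ∈ t, w y := by
            exact dite_sum_helper t hcard w
          rw [this, hw1]
      · intro i _
        simp only [hz]
        split_ifs with hi
        · exact hts (Finset.coe_mem _)
        · exact hts hy₀t
      · show (∑ i, ω i • z i) = x
        have hterm : ∀ i : Fin N, ω i • z i =
            if hi : (i : ℕ) < t.card then
              (fun y => w y • y) ((t.equivFin.symm ⟨(i : ℕ), hi⟩ : t) : Fin n → ℝ) else 0 := by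
          intro i
          simp only [hω, hz]
          split_ifs with hi
          · rfl
          · exact zero_smul ℝ _
        rw [Finset.sum_congr rfl fun i _ => hterm i, dite_sum_helper t hcard (fun y => w y • y),
          hxw]
    · rintro x ⟨⟨ω, z⟩, ⟨hω, hz⟩, rfl⟩
      exact mem_convexHull_of_exists_fintype ω z hω.1 hω.2 (fun i => hz i (Set.mem_univ i)) rfl
  rw [himg]
  exact hK.image hf


def orb (G : Subgroup (Matrix.orthogonalGroup (Fin n) ℝ)) (y : Fin n → ℝ) :
    Set (Fin n → ℝ) :=
  {p | ∃ g ∈ G, p = (g : Matrix (Fin n) (Fin n) ℝ) *ᵥ y}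

variable (G : Subgroup (Matrix.orthogonalGroup (Fin n) ℝ))

lemma self_mem_orb (y : Fin n → ℝ) : y ∈ orb G y :=
  ⟨1, G.one_mem, by rw [Matrix.UnitaryGroup.one_val, Matrix.one_mulVec]⟩

lemma orb_subset_sph {y : Fin n → ℝ} (hy : y ∈ sph n) : orb G y ⊆ sph n := by
  rintro p ⟨g, hg, rfl⟩
  show _ ⬝ᵥ _ = 1
  rw [orth_dot g y y]
  exact hy

lemma closure_orb_subset_sph {y : Fin n → ℝ} (hy : y ∈ sph n) :
    closure (orb G y) ⊆ sph n :=
  isClosed_sph.closure_subset_iff.2 (orb_subset_sph G hy)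

lemma mulVec_mem_closure_orb {y : Fin n → ℝ} {g : Matrix.orthogonalGroup (Fin n) ℝ}
    (hg : g ∈ G) {q : Fin n → ℝ} (hq : q ∈ closure (orb G y)) :
    (g : Matrix (Fin n) (Fin n) ℝ) *ᵥ q ∈ closure (orb G y) := by
  have hmap : (fun v => (g : Matrix (Fin n) (Fin n) ℝ) *ᵥ v) '' (orb G y) ⊆ orb G y := by
    rintro _ ⟨p, ⟨h, hh, rfl⟩, rfl⟩
    refine ⟨g * h, G.mul_mem hg hh, ?_⟩
    rw [Matrix.UnitaryGroup.mul_val, ← Matrix.mulVec_mulVec]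
  have h1 : (g : Matrix (Fin n) (Fin n) ℝ) *ᵥ q ∈
      (fun v => (g : Matrix (Fin n) (Fin n) ℝ) *ᵥ v) '' closure (orb G y) :=
    ⟨q, hq, rfl⟩
  have h2 := image_closure_subset_closure_image (s := orb G y)
      (continuous_mulVec (g : Matrix (Fin n) (Fin n) ℝ))
  exact closure_mono hmap (h2 h1)

lemma zero_mem_hull
    (hfix : ¬ ∃ v : Fin n → ℝ, v ≠ 0 ∧ ∀ g ∈ G, (g : Matrix (Fin n) (Fin n) ℝ) *ᵥ v = v)
    {y : Fin n → ℝ} (hy : y ∈ sph n) :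
    (0 : Fin n → ℝ) ∈ convexHull ℝ (closure (orb G y)) := by
  set S := closure (orb G y) with hSdef
  have hSsub : S ⊆ sph n := closure_orb_subset_sph G hy
  have hScpt : IsCompact S := isCompact_of_subset_sph isClosed_closure hSsub
  set K := convexHull ℝ S with hKdef
  have hKcpt : IsCompact K := isCompact_convexHull_of_isCompact hScpt
  have hKne : K.Nonempty := ⟨y, subset_convexHull ℝ S (subset_closure (self_mem_orb G y))⟩
  have hKconv : Convex ℝ K := convex_convexHull ℝ S
  have hKinv : ∀ g ∈ G, ∀ v ∈ K, (g : Matrix (Fin n) (Fin n) ℝ) *ᵥ v ∈ K := by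
    intro g hg v hv
    have h1 : (g : Matrix (Fin n) (Fin n) ℝ) *ᵥ v ∈ (Matrix.mulVecLin (g : Matrix (Fin n) (Fin n) ℝ)) '' K :=
      ⟨v, hv, by simp [Matrix.mulVecLin]⟩
    rw [hKdef, LinearMap.image_convexHull] at h1
    refine convexHull_mono ?_ h1
    rintro _ ⟨q, hq, rfl⟩
    simpa [Matrix.mulVecLin] using mulVec_mem_closure_orb G hg hq
  obtain ⟨c, hcK, hmin⟩ := hKcpt.exists_isMinOn hKne continuous_dot_self.continuousOn
  have hcfix : ∀ g ∈ G, (g : Matrix (Fin n) (Fin n) ℝ) *ᵥ c = c := by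
    intro g hg
    set c' := (g : Matrix (Fin n) (Fin n) ℝ) *ᵥ c with hc'
    have hc'K : c' ∈ K := hKinv g hg c hcK
    have hQ : c' ⬝ᵥ c' = c ⬝ᵥ c := orth_dot g c c
    have hmK : ((1:ℝ)/2) • c + ((1:ℝ)/2) • c' ∈ K :=
      hKconv hcK hc'K (by norm_num) (by norm_num) (by norm_num)
    have h1 : c ⬝ᵥ c ≤ (((1:ℝ)/2) • c + ((1:ℝ)/2) • c') ⬝ᵥ (((1:ℝ)/2) • c + ((1:ℝ)/2) • c') :=
      isMinOn_iff.1 hmin _ hmK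
    have hexp : (((1:ℝ)/2) • c + ((1:ℝ)/2) • c') ⬝ᵥ (((1:ℝ)/2) • c + ((1:ℝ)/2) • c') =
        (1/4) * (c ⬝ᵥ c) + (1/2) * (c ⬝ᵥ c') + (1/4) * (c' ⬝ᵥ c') := by
      simp only [add_dotProduct, dotProduct_add, smul_dotProduct,
        dotProduct_smul, smul_eq_mul]
      rw [dotProduct_comm c' c]
      ring
    have hsub : (c - c') ⬝ᵥ (c - c') = (c ⬝ᵥ c) - 2 * (c ⬝ᵥ c') + (c' ⬝ᵥ c') := by
      simp only [sub_dotProduct, dotProduct_sub]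
      rw [dotProduct_comm c' c]
      ring
    have h2 : (c - c') ⬝ᵥ (c - c') ≤ 0 := by
      rw [hsub]
      rw [hexp, hQ] at h1
      linarith
    have h3 : c - c' = 0 :=
      dotProduct_self_eq_zero.1 (le_antisymm h2 (dot_self_nonneg _))
    have : c' = c := by
      have := sub_eq_zero.1 h3
      exact this.symm
    rw [hc'] at this
    exact this
  have hc0 : c = 0 := by
    by_contra h
    exact hfix ⟨c, h, hcfix⟩
  rw [← hc0]
  exact hcK

lemma exists_witness
    (hfix : ¬ ∃ v : Fin n → ℝ, v ≠ 0 ∧ ∀ g ∈ G, (g : Matrix (Fin n) (Fin n) ℝ) *ᵥ v = v)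
    {y : Fin n → ℝ} (hy : y ∈ sph n) :
    ∃ (ι : Type) (_ : Fintype ι) (w : ι → ℝ) (z : ι → Fin n → ℝ) (j₀ : ι),
      (∀ i, 0 ≤ w i) ∧ (∀ i, z i ∈ closure (orb G y)) ∧ 0 < w j₀ ∧
      (∑ i, w i • z i) = 0 := by
  obtain ⟨ι, hft, w, z, hw0, hw1, hz, hsum⟩ :=
    mem_convexHull_iff_exists_fintype.1 (zero_mem_hull G hfix hy)
  have : ∃ j₀, w j₀ ≠ 0 := by
    by_contra h
    push_neg at h
    rw [Finset.sum_eq_zero (fun i _ => h i)] at hw1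
    exact one_ne_zero hw1.symm
  obtain ⟨j₀, hj₀⟩ := this
  exact ⟨ι, hft, w, z, j₀, hw0, hz, lt_of_le_of_ne (hw0 j₀) (Ne.symm hj₀), hsum⟩

lemma dot_finsum {ι : Type} [Fintype ι] (p : Fin n → ℝ) (w : ι → ℝ) (z : ι → Fin n → ℝ) :
    p ⬝ᵥ (∑ i, w i • z i) = ∑ i, w i * (p ⬝ᵥ z i) := by
  simp only [dotProduct, Finset.sum_apply, Pi.smul_apply, smul_eq_mul, Finset.mul_sum]
  rw [Finset.sum_comm]
  apply Finset.sum_congr rfl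
  intro i _
  apply Finset.sum_congr rfl
  intro j _
  ring

lemma span_mulVec_mem (x : Fin n → ℝ) {g : Matrix.orthogonalGroup (Fin n) ℝ} (hg : g ∈ G)
    {v : Fin n → ℝ} (hv : v ∈ Submodule.span ℝ (orb G x)) :
    (g : Matrix (Fin n) (Fin n) ℝ) *ᵥ v ∈ Submodule.span ℝ (orb G x) := by
  induction hv using Submodule.span_induction with
  | mem p hp =>
      obtain ⟨h, hh, rfl⟩ := hp
      apply Submodule.subset_span
      exact ⟨g * h, G.mul_mem hg hh, by rw [Matrix.UnitaryGroup.mul_val, ← Matrix.mulVec_mulVec]⟩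
  | zero => rw [Matrix.mulVec_zero]; exact Submodule.zero_mem _
  | add u v _ _ hu hv => rw [Matrix.mulVec_add]; exact Submodule.add_mem _ hu hv
  | smul a u _ hu => rw [Matrix.mulVec_smul]; exact Submodule.smul_mem _ a hu

lemma eq_zero_of_dot_orb_zero {x q : Fin n → ℝ}
    (hspan : Submodule.span ℝ (orb G x) = ⊤)
    (h : ∀ p ∈ orb G x, p ⬝ᵥ q = 0) : q = 0 := by
  have key : ∀ v ∈ Submodule.span ℝ (orb G x), v ⬝ᵥ q = 0 := by
    intro v hv
    induction hv using Submodule.span_induction with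
    | mem p hp => exact h p hp
    | zero => exact zero_dotProduct q
    | add u v _ _ hu hv => rw [add_dotProduct, hu, hv, add_zero]
    | smul a u _ hu => rw [smul_dotProduct, hu, smul_zero]
  have hq : q ⬝ᵥ q = 0 := key q (hspan ▸ Submodule.mem_top)
  exact dotProduct_self_eq_zero.1 hq


lemma dot_abs_le (x v : Fin n → ℝ) : |x ⬝ᵥ v| ≤ (∑ i, |x i|) * ‖v‖ := by
  calc |∑ i, x i * v i| ≤ ∑ i, |x i * v i| := Finset.abs_sum_le_sum_abs _ _
    _ = ∑ i, |x i| * |v i| := by simp [abs_mul]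
    _ ≤ ∑ i, |x i| * ‖v‖ := Finset.sum_le_sum fun i _ =>
        mul_le_mul_of_nonneg_left ((Real.norm_eq_abs (v i)) ▸ norm_le_pi_norm v i) (abs_nonneg _)
    _ = (∑ i, |x i|) * ‖v‖ := (Finset.sum_mul _ _ _).symm

lemma exists_mem_orb_dot_gt {y q : Fin n → ℝ} (hq : q ∈ closure (orb G y)) (x : Fin n → ℝ)
    {δ : ℝ} (hδ : 0 < δ) :
    ∃ g ∈ G, x ⬝ᵥ q - δ < x ⬝ᵥ ((g : Matrix (Fin n) (Fin n) ℝ) *ᵥ y) := by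
  set C := ∑ i, |x i| with hC
  have hC0 : 0 ≤ C := Finset.sum_nonneg fun i _ => abs_nonneg _
  have hpos : 0 < δ / (C + 1) := by positivity
  obtain ⟨p, hporb, hdist⟩ := Metric.mem_closure_iff.1 hq _ hpos
  obtain ⟨g, hg, rfl⟩ := hporb
  refine ⟨g, hg, ?_⟩
  have h1 : |x ⬝ᵥ q - x ⬝ᵥ ((g : Matrix (Fin n) (Fin n) ℝ) *ᵥ y)| ≤
      C * dist q ((g : Matrix (Fin n) (Fin n) ℝ) *ᵥ y) := by
    rw [← dotProduct_sub, dist_eq_norm]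
    exact dot_abs_le x _
  have h2 : C * dist q ((g : Matrix (Fin n) (Fin n) ℝ) *ᵥ y) < δ := by
    have h3 : C * dist q ((g : Matrix (Fin n) (Fin n) ℝ) *ᵥ y) ≤ C * (δ / (C + 1)) :=
      mul_le_mul_of_nonneg_left hdist.le hC0
    have h4 : C * (δ / (C + 1)) < δ := by
      rw [mul_div_assoc']
      exact (div_lt_iff₀ (by linarith)).2 (by nlinarith)
    linarith
  have h5 := (abs_lt.1 (lt_of_le_of_lt h1 h2)).2
  linarith

lemma exists_nonneg_dot
    (hfix : ¬ ∃ v : Fin n → ℝ, v ≠ 0 ∧ ∀ g ∈ G, (g : Matrix (Fin n) (Fin n) ℝ) *ᵥ v = v)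
    {y : Fin n → ℝ} (hy : y ∈ sph n) (x : Fin n → ℝ) :
    ∃ q ∈ closure (orb G y), 0 ≤ x ⬝ᵥ q := by
  obtain ⟨ι, hft, w, z, j₀, hw0, hz, hj₀, hsum⟩ := exists_witness G hfix hy
  by_contra h
  push_neg at h
  have h0 : (∑ i, w i * (x ⬝ᵥ z i)) = 0 := by
    rw [← dot_finsum, hsum, dotProduct_zero]
  have hterms : ∀ i ∈ Finset.univ, w i * (x ⬝ᵥ z i) ≤ 0 := fun i _ =>
    mul_nonpos_iff.2 (Or.inl ⟨hw0 i, (h _ (hz i)).le⟩)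
  have hz0 := (Finset.sum_eq_zero_iff_of_nonpos hterms).1 h0 j₀ (Finset.mem_univ _)
  have hneg : x ⬝ᵥ z j₀ < 0 := h _ (hz j₀)
  nlinarith

lemma exists_orth_witness
    (hfix : ¬ ∃ v : Fin n → ℝ, v ≠ 0 ∧ ∀ g ∈ G, (g : Matrix (Fin n) (Fin n) ℝ) *ᵥ v = v)
    {x y : Fin n → ℝ} (hy : y ∈ sph n)
    (hneg : ∀ p ∈ orb G x, ∀ q ∈ closure (orb G y), p ⬝ᵥ q ≤ 0) :
    ∃ q ∈ closure (orb G y), ∀ p ∈ orb G x, p ⬝ᵥ q = 0 := by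
  obtain ⟨ι, hft, w, z, j₀, hw0, hz, hj₀, hsum⟩ := exists_witness G hfix hy
  refine ⟨z j₀, hz j₀, fun p hp => ?_⟩
  have h0 : (∑ i, w i * (p ⬝ᵥ z i)) = 0 := by
    rw [← dot_finsum, hsum, dotProduct_zero]
  have hterms : ∀ i ∈ Finset.univ, w i * (p ⬝ᵥ z i) ≤ 0 := fun i _ =>
    mul_nonpos_iff.2 (Or.inl ⟨hw0 i, hneg p hp _ (hz i)⟩)
  have hz0 := (Finset.sum_eq_zero_iff_of_nonpos hterms).1 h0 j₀ (Finset.mem_univ _)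
  rcases mul_eq_zero.1 hz0 with h | h
  · exact absurd h (ne_of_gt hj₀)
  · exact h

lemma dot_le_closure {y p : Fin n → ℝ} (h : ∀ q ∈ orb G y, p ⬝ᵥ q ≤ 0) :
    ∀ q ∈ closure (orb G y), p ⬝ᵥ q ≤ 0 := by
  intro q hq
  have hcl : closure (orb G y) ⊆ {q | p ⬝ᵥ q ≤ 0} :=
    closure_minimal h (isClosed_le (continuous_dot_left p) continuous_const)
  exact hcl hq

lemma sInf_le_pi_div_two
    (hfix : ¬ ∃ v : Fin n → ℝ, v ≠ 0 ∧ ∀ g ∈ G, (g : Matrix (Fin n) (Fin n) ℝ) *ᵥ v = v)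
    {x y : Fin n → ℝ} (hy : y ∈ sph n) :
    sInf {r : ℝ | ∃ g ∈ G, r = Real.arccos (x ⬝ᵥ ((g : Matrix (Fin n) (Fin n) ℝ) *ᵥ y))} ≤
      π / 2 := by
  set R := {r : ℝ | ∃ g ∈ G, r = Real.arccos (x ⬝ᵥ ((g : Matrix (Fin n) (Fin n) ℝ) *ᵥ y))}
    with hR
  have hbdd : BddBelow R := by
    refine ⟨0, ?_⟩
    rintro r ⟨g, hg, rfl⟩
    exact Real.arccos_nonneg _
  by_contra hlt
  push_neg at hlt
  set ε := sInf R - π / 2 with hε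
  have hε0 : 0 < ε := by simp [hε]; linarith
  set m := min (ε / 2) (π / 4) with hm
  have hm0 : 0 < m := lt_min (by linarith) (by linarith [pi_pos])
  have hmπ : m < π := lt_of_le_of_lt (min_le_right _ _) (by linarith [pi_pos])
  set δ := Real.sin m with hδ
  have hδ0 : 0 < δ := Real.sin_pos_of_pos_of_lt_pi hm0 hmπ
  obtain ⟨q, hq, hq0⟩ := exists_nonneg_dot G hfix hy x
  obtain ⟨g, hg, hgt⟩ := exists_mem_orb_dot_gt G hq x hδ0
  have hval : -δ ≤ x ⬝ᵥ ((g : Matrix (Fin n) (Fin n) ℝ) *ᵥ y) := by linarith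
  have h1 : sInf R ≤ Real.arccos (x ⬝ᵥ ((g : Matrix (Fin n) (Fin n) ℝ) *ᵥ y)) :=
    csInf_le hbdd ⟨g, hg, rfl⟩
  have h2 : Real.arccos (x ⬝ᵥ ((g : Matrix (Fin n) (Fin n) ℝ) *ᵥ y)) ≤ Real.arccos (-δ) :=
    arccos_anti hval
  have h3 : Real.arccos (-δ) = π / 2 + Real.arcsin δ := by
    rw [Real.arccos_neg, Real.arccos]
    ring
  have h4 : Real.arcsin δ = m := by
    rw [hδ, Real.arcsin_sin (by linarith) (le_trans (min_le_right _ _) (by linarith [pi_pos]))]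
  have h5 : m ≤ ε / 2 := min_le_left _ _
  rw [h3, h4] at h2
  have : sInf R ≤ π / 2 + ε / 2 := by linarith
  simp only [hε] at this
  linarith

end SphereQuotAux

/-- The diameter of the quotient `S^(n-1)/G`: `sup_{x,y} inf_{g ∈ G} d(x, g·y)`, where
`d(x,y) = arccos ⟨x,y⟩` is the round (geodesic/angular) metric on the unit sphere of `ℝ^n`. -/
noncomputable def sphereQuotDiam {n : ℕ} (G : Set (Matrix.orthogonalGroup (Fin n) ℝ)) : ℝ :=
  sSup {d : ℝ | ∃ x y : Fin n → ℝ, (∑ i, x i ^ 2) = 1 ∧ (∑ i, y i ^ 2) = 1 ∧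
    d = sInf {r : ℝ | ∃ g ∈ G,
      r = Real.arccos (∑ i, x i * (g : Matrix (Fin n) (Fin n) ℝ).mulVec y i)}}

/-- Let `G ⊆ O(n)` be a closed subgroup. Then `diam (S^(n-1)/G) = π` iff `G` fixes a
non-zero vector; otherwise `diam (S^(n-1)/G) ≤ π/2`, with equality precisely when the
representation of `G` on `ℝ^n` is reducible. -/
theorem sphereQuotDiam_reducibility (n : ℕ)
    (G : Subgroup (Matrix.orthogonalGroup (Fin n) ℝ))
    (hG : IsClosed (G : Set (Matrix.orthogonalGroup (Fin n) ℝ))) :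
    (sphereQuotDiam (G : Set (Matrix.orthogonalGroup (Fin n) ℝ)) = Real.pi ↔
      ∃ v : Fin n → ℝ, v ≠ 0 ∧ ∀ g ∈ G, (g : Matrix (Fin n) (Fin n) ℝ).mulVec v = v) ∧
    ((¬ ∃ v : Fin n → ℝ, v ≠ 0 ∧ ∀ g ∈ G, (g : Matrix (Fin n) (Fin n) ℝ).mulVec v = v) →
      sphereQuotDiam (G : Set (Matrix.orthogonalGroup (Fin n) ℝ)) ≤ Real.pi / 2 ∧
      (sphereQuotDiam (G : Set (Matrix.orthogonalGroup (Fin n) ℝ)) = Real.pi / 2 ↔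
        ∃ W : Submodule ℝ (Fin n → ℝ), W ≠ ⊥ ∧ W ≠ ⊤ ∧
          ∀ g ∈ G, ∀ v ∈ W, (g : Matrix (Fin n) (Fin n) ℝ).mulVec v ∈ W)) := by
  classical
  open SphereQuotAux in
  unfold sphereQuotDiam
  set R : (Fin n → ℝ) → (Fin n → ℝ) → Set ℝ := fun x y =>
    {r : ℝ | ∃ g ∈ G, r = Real.arccos (x ⬝ᵥ ((g : Matrix (Fin n) (Fin n) ℝ) *ᵥ y))} with hRdef
  set Dset := {d : ℝ | ∃ x y : Fin n → ℝ, (∑ i, x i ^ 2) = 1 ∧ (∑ i, y i ^ 2) = 1 ∧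
    d = sInf {r : ℝ | ∃ g ∈ (G : Set (Matrix.orthogonalGroup (Fin n) ℝ)),
      r = Real.arccos (∑ i, x i * (g : Matrix (Fin n) (Fin n) ℝ).mulVec y i)}} with hDsetdef
  have hDset' : Dset = {d : ℝ | ∃ x y : Fin n → ℝ,
      x ∈ SphereQuotAux.sph n ∧ y ∈ SphereQuotAux.sph n ∧ d = sInf (R x y)} := by
    ext d
    constructor
    · rintro ⟨x, y, hx, hy, rfl⟩
      refine ⟨x, y, ?_, ?_, rfl⟩
      · show x ⬝ᵥ x = 1
        rw [← SphereQuotAux.sum_sq_eq_dot]; exact hx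
      · show y ⬝ᵥ y = 1
        rw [← SphereQuotAux.sum_sq_eq_dot]; exact hy
    · rintro ⟨x, y, hx, hy, rfl⟩
      refine ⟨x, y, ?_, ?_, rfl⟩
      · rw [SphereQuotAux.sum_sq_eq_dot]; exact hx
      · rw [SphereQuotAux.sum_sq_eq_dot]; exact hy
  have hRne : ∀ x y : Fin n → ℝ, (R x y).Nonempty := fun x y =>
    ⟨_, 1, G.one_mem, rfl⟩
  have hRbdd : ∀ x y : Fin n → ℝ, BddBelow (R x y) := by
    intro x y
    refine ⟨0, ?_⟩
    rintro r ⟨g, hg, rfl⟩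
    exact Real.arccos_nonneg _
  have hInfle : ∀ x y : Fin n → ℝ, sInf (R x y) ≤ π := fun x y =>
    csInf_le_of_le (hRbdd x y) ⟨1, G.one_mem, rfl⟩ (Real.arccos_le_pi _)
  have hDub : ∀ d ∈ Dset, d ≤ π := by
    rw [hDset']
    rintro d ⟨x, y, hx, hy, rfl⟩
    exact hInfle x y
  have hDbdd : BddAbove Dset := ⟨π, hDub⟩
  have Hle : (¬ ∃ v : Fin n → ℝ, v ≠ 0 ∧ ∀ g ∈ G, (g : Matrix (Fin n) (Fin n) ℝ).mulVec v = v) →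
      sSup Dset ≤ π / 2 := by
    intro hfix
    refine Real.sSup_le ?_ (by linarith [pi_pos])
    rw [hDset']
    rintro d ⟨x, y, hx, hy, rfl⟩
    exact SphereQuotAux.sInf_le_pi_div_two G hfix hy
  refine ⟨⟨?_, ?_⟩, ?_⟩
  · -- sSup = π → fixed vector
    intro hDπ
    by_contra hfix
    have h := Hle hfix
    rw [hDπ] at h
    linarith [pi_pos]
  · -- fixed vector → sSup = π
    rintro ⟨v, hv0, hvfix⟩
    have ha : 0 < v ⬝ᵥ v := by
      rcases lt_or_eq_of_le (SphereQuotAux.dot_self_nonneg v) with h | h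
      · exact h
      · exact absurd (dotProduct_self_eq_zero.1 h.symm) hv0
    have hsqrt : Real.sqrt (v ⬝ᵥ v) ≠ 0 := ne_of_gt (Real.sqrt_pos.2 ha)
    set u := (Real.sqrt (v ⬝ᵥ v))⁻¹ • v with hu
    have huu : u ⬝ᵥ u = 1 := by
      rw [hu, smul_dotProduct, dotProduct_smul, smul_eq_mul, smul_eq_mul]
      have hss : Real.sqrt (v ⬝ᵥ v) * Real.sqrt (v ⬝ᵥ v) = v ⬝ᵥ v :=
        Real.mul_self_sqrt ha.le
      field_simp
      rw [sq, hss]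
    have hufix : ∀ g ∈ G, (g : Matrix (Fin n) (Fin n) ℝ) *ᵥ u = u := by
      intro g hg
      rw [hu, Matrix.mulVec_smul, hvfix g hg]
    have hxs : (-u) ⬝ᵥ (-u) = 1 := by
      rw [neg_dotProduct, dotProduct_neg, neg_neg, huu]
    have hRval : R (-u) u = {π} := by
      ext r
      constructor
      · rintro ⟨g, hg, rfl⟩
        rw [hufix g hg, neg_dotProduct, huu]
        simp [Real.arccos_neg_one]
      · rintro rfl
        exact ⟨1, G.one_mem, by
          rw [Matrix.UnitaryGroup.one_val, Matrix.one_mulVec, neg_dotProduct, huu]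
          exact Real.arccos_neg_one.symm⟩
    have hπD : π ∈ Dset := by
      rw [hDset']
      exact ⟨-u, u, hxs, huu, by rw [hRval, csInf_singleton]⟩
    exact le_antisymm (Real.sSup_le hDub pi_pos.le) (le_csSup hDbdd hπD)
  · -- no fixed vector
    intro hfix
    refine ⟨Hle hfix, ?_, ?_⟩
    · -- sSup = π/2 → reducible
      intro hD
      have hDne : Dset.Nonempty := by
        by_contra h
        rw [Set.not_nonempty_iff_eq_empty] at h
        rw [h, Real.sSup_empty] at hD
        linarith [pi_pos]
      set A : ℕ → Set ((Fin n → ℝ) × (Fin n → ℝ)) := fun k =>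
        {p | (p.1 ∈ SphereQuotAux.sph n ∧ p.2 ∈ SphereQuotAux.sph n) ∧ ∀ g ∈ G,
          π/2 - 1/(k+1) ≤ Real.arccos (p.1 ⬝ᵥ ((g : Matrix (Fin n) (Fin n) ℝ) *ᵥ p.2))} with hA
      have hAclosed : ∀ k, IsClosed (A k) := by
        intro k
        have heq : A k = ({p : (Fin n → ℝ) × (Fin n → ℝ) |
            p.1 ∈ SphereQuotAux.sph n ∧ p.2 ∈ SphereQuotAux.sph n} ∩
            ⋂ g ∈ (G : Set (Matrix.orthogonalGroup (Fin n) ℝ)),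
              {p : (Fin n → ℝ) × (Fin n → ℝ) |
                π/2 - 1/(k+1) ≤ Real.arccos (p.1 ⬝ᵥ ((g : Matrix (Fin n) (Fin n) ℝ) *ᵥ p.2))}) := by
          ext p
          simp only [hA, Set.mem_setOf_eq, Set.mem_inter_iff, Set.mem_iInter, SetLike.mem_coe]
        rw [heq]
        refine IsClosed.inter ?_ (isClosed_biInter fun g _ => ?_)
        · exact (SphereQuotAux.isClosed_sph.preimage continuous_fst).inter
            (SphereQuotAux.isClosed_sph.preimage continuous_snd)
        · refine isClosed_le continuous_const (Real.continuous_arccos.comp ?_)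
          exact SphereQuotAux.continuous_dot₂.comp
            (continuous_fst.prodMk ((SphereQuotAux.continuous_mulVec _).comp continuous_snd))
      have hsphcpt : IsCompact (SphereQuotAux.sph n) :=
        SphereQuotAux.isCompact_of_subset_sph SphereQuotAux.isClosed_sph (subset_refl _)
      have hAcpt : ∀ k, IsCompact (A k) := by
        intro k
        refine IsCompact.of_isClosed_subset (hsphcpt.prod hsphcpt) (hAclosed k) ?_
        rintro p ⟨⟨h1, h2⟩, _⟩
        exact ⟨h1, h2⟩
      have hAne : ∀ k, (A k).Nonempty := by
        intro k
        have h1 : (0:ℝ) < 1/((k:ℝ)+1) := by positivity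
        have hk : π/2 - 1/((k:ℝ)+1) < sSup Dset := by rw [hD]; linarith
        obtain ⟨d, hdmem, hdlt⟩ := exists_lt_of_lt_csSup hDne hk
        rw [hDset'] at hdmem
        obtain ⟨x, y, hx, hy, rfl⟩ := hdmem
        refine ⟨(x, y), ⟨⟨hx, hy⟩, ?_⟩⟩
        intro g hg
        have h2 : sInf (R x y) ≤ Real.arccos (x ⬝ᵥ ((g : Matrix (Fin n) (Fin n) ℝ) *ᵥ y)) :=
          csInf_le (hRbdd x y) ⟨g, hg, rfl⟩
        linarith
      have hAdir : Directed (· ⊇ ·) A := by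
        have mono : ∀ k l : ℕ, k ≤ l → A l ⊆ A k := by
          intro k l hkl p hp
          refine ⟨hp.1, fun g hg => le_trans ?_ (hp.2 g hg)⟩
          have h1 : 1/((l:ℝ)+1) ≤ 1/((k:ℝ)+1) := by
            apply one_div_le_one_div_of_le
            · positivity
            · have : (k:ℝ) ≤ (l:ℝ) := Nat.cast_le.2 hkl
              linarith
          linarith
        intro k l
        exact ⟨max k l, mono k _ (le_max_left _ _), mono l _ (le_max_right _ _)⟩
      obtain ⟨⟨x, y⟩, hmem⟩ :=
        IsCompact.nonempty_iInter_of_directed_nonempty_isCompact_isClosed A hAdir hAne hAcpt hAclosed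
      simp only [Set.mem_iInter] at hmem
      have hx : x ∈ SphereQuotAux.sph n := (hmem 0).1.1
      have hy : y ∈ SphereQuotAux.sph n := (hmem 0).1.2
      have hub : ∀ g ∈ G, π/2 ≤ Real.arccos (x ⬝ᵥ ((g : Matrix (Fin n) (Fin n) ℝ) *ᵥ y)) := by
        intro g hg
        by_contra h
        push_neg at h
        obtain ⟨k, hk⟩ := exists_nat_one_div_lt (sub_pos.2 h)
        have h2 := (hmem k).2 g hg
        linarith
      have hneg : ∀ g ∈ G, x ⬝ᵥ ((g : Matrix (Fin n) (Fin n) ℝ) *ᵥ y) ≤ 0 := by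
        intro g hg
        by_contra h
        push_neg at h
        exact absurd (hub g hg) (not_le.2 (SphereQuotAux.arccos_lt_pi_div_two h))
      have hneg2 : ∀ p ∈ SphereQuotAux.orb G x, ∀ q ∈ SphereQuotAux.orb G y, p ⬝ᵥ q ≤ 0 := by
        rintro _ ⟨g, hg, rfl⟩ _ ⟨h, hh, rfl⟩
        have key : (h : Matrix (Fin n) (Fin n) ℝ) *ᵥ y =
            (g : Matrix (Fin n) (Fin n) ℝ) *ᵥ (((g⁻¹ * h : _) : Matrix (Fin n) (Fin n) ℝ) *ᵥ y) := by
          rw [Matrix.mulVec_mulVec, ← Matrix.UnitaryGroup.mul_val, mul_inv_cancel_left]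
        rw [key, SphereQuotAux.orth_dot g]
        exact hneg _ (G.mul_mem (G.inv_mem hg) hh)
      by_cases hspan : Submodule.span ℝ (SphereQuotAux.orb G x) = ⊤
      · exfalso
        have hneg3 : ∀ p ∈ SphereQuotAux.orb G x, ∀ q ∈ closure (SphereQuotAux.orb G y),
            p ⬝ᵥ q ≤ 0 := fun p hp => SphereQuotAux.dot_le_closure G (hneg2 p hp)
        obtain ⟨q, hqcl, hqorth⟩ := SphereQuotAux.exists_orth_witness G hfix hy hneg3
        have hq0 : q = 0 := SphereQuotAux.eq_zero_of_dot_orb_zero G hspan hqorth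
        have hqs : q ∈ SphereQuotAux.sph n := SphereQuotAux.closure_orb_subset_sph G hy hqcl
        rw [hq0] at hqs
        exact SphereQuotAux.sph_ne_zero hqs rfl
      · refine ⟨Submodule.span ℝ (SphereQuotAux.orb G x), ?_, hspan, ?_⟩
        · intro h
          have hmem2 : x ∈ Submodule.span ℝ (SphereQuotAux.orb G x) :=
            Submodule.subset_span (SphereQuotAux.self_mem_orb G x)
          rw [h] at hmem2
          exact SphereQuotAux.sph_ne_zero hx (by simpa using hmem2)
        · intro g hg v hv
          exact SphereQuotAux.span_mulVec_mem G x hg hv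
    · -- reducible → sSup = π/2
      rintro ⟨W, hWbot, hWtop, hWinv⟩
      obtain ⟨y₀, hy₀W, hy₀0⟩ := Submodule.exists_mem_ne_zero_of_ne_bot hWbot
      have hya : 0 < y₀ ⬝ᵥ y₀ := by
        rcases lt_or_eq_of_le (SphereQuotAux.dot_self_nonneg y₀) with h | h
        · exact h
        · exact absurd (dotProduct_self_eq_zero.1 h.symm) hy₀0
      have hysqrt : Real.sqrt (y₀ ⬝ᵥ y₀) ≠ 0 := ne_of_gt (Real.sqrt_pos.2 hya)
      set yy := (Real.sqrt (y₀ ⬝ᵥ y₀))⁻¹ • y₀ with hyy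
      have hyys : yy ⬝ᵥ yy = 1 := by
        rw [hyy, smul_dotProduct, dotProduct_smul, smul_eq_mul, smul_eq_mul]
        have hss : Real.sqrt (y₀ ⬝ᵥ y₀) * Real.sqrt (y₀ ⬝ᵥ y₀) = y₀ ⬝ᵥ y₀ :=
          Real.mul_self_sqrt hya.le
        field_simp
        rw [sq, hss]
      have hyyW : yy ∈ W := W.smul_mem _ hy₀W
      -- find x orthogonal to W
      set li := (WithLp.linearEquiv 2 ℝ (Fin n → ℝ)) with hli
      set W' : Submodule ℝ (EuclideanSpace ℝ (Fin n)) := W.comap li.toLinearMap with hW'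
      have hW'top : W' ≠ ⊤ := by
        intro h
        apply hWtop
        rw [Submodule.eq_top_iff']
        intro v
        have h2 : li.symm v ∈ W' := h ▸ Submodule.mem_top
        have h3 : li (li.symm v) ∈ W := h2
        rwa [LinearEquiv.apply_symm_apply] at h3
      have hW'orth : W'ᗮ ≠ ⊥ := by
        intro h
        exact hW'top (Submodule.orthogonal_eq_bot_iff.1 h)
      obtain ⟨x', hx'W, hx'0⟩ := Submodule.exists_mem_ne_zero_of_ne_bot hW'orth
      set x : Fin n → ℝ := li x' with hxdef
      have hx0 : x ≠ 0 := by
        intro h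
        exact hx'0 (by rwa [hxdef, LinearEquiv.map_eq_zero_iff] at h)
      have hxorth : ∀ w ∈ W, x ⬝ᵥ w = 0 := by
        intro w hw
        have h1 : li.symm w ∈ W' := by
          have : li (li.symm w) ∈ W := by rwa [LinearEquiv.apply_symm_apply]
          exact this
        have h3 : (inner ℝ x' (li.symm w) : ℝ) = 0 :=
          (Submodule.mem_orthogonal' W' x').1 hx'W _ h1
        rw [PiLp.inner_apply] at h3
        simpa [RCLike.inner_apply, conj_trivial, dotProduct, hxdef, hli, mul_comm] using h3
      have hxa : 0 < x ⬝ᵥ x := by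
        rcases lt_or_eq_of_le (SphereQuotAux.dot_self_nonneg x) with h | h
        · exact h
        · exact absurd (dotProduct_self_eq_zero.1 h.symm) hx0
      have hxsqrt : Real.sqrt (x ⬝ᵥ x) ≠ 0 := ne_of_gt (Real.sqrt_pos.2 hxa)
      set xx := (Real.sqrt (x ⬝ᵥ x))⁻¹ • x with hxx
      have hxxs : xx ⬝ᵥ xx = 1 := by
        rw [hxx, smul_dotProduct, dotProduct_smul, smul_eq_mul, smul_eq_mul]
        have hss : Real.sqrt (x ⬝ᵥ x) * Real.sqrt (x ⬝ᵥ x) = x ⬝ᵥ x :=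
          Real.mul_self_sqrt hxa.le
        field_simp
        rw [sq, hss]
      have hxxorth : ∀ w ∈ W, xx ⬝ᵥ w = 0 := by
        intro w hw
        rw [hxx, smul_dotProduct, hxorth w hw, smul_zero]
      have hval : ∀ g ∈ G, xx ⬝ᵥ ((g : Matrix (Fin n) (Fin n) ℝ) *ᵥ yy) = 0 := fun g hg =>
        hxxorth _ (hWinv g hg yy hyyW)
      have hRval : R xx yy = {π/2} := by
        ext r
        constructor
        · rintro ⟨g, hg, rfl⟩
          rw [hval g hg]
          simp [Real.arccos_zero]
        · rintro rfl
          refine ⟨1, G.one_mem, ?_⟩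
          rw [hval 1 G.one_mem]
          exact Real.arccos_zero.symm
      have hmemD : π/2 ∈ Dset := by
        rw [hDset']
        exact ⟨xx, yy, hxxs, hyys, by rw [hRval, csInf_singleton]⟩
      exact le_antisymm (Hle hfix) (le_csSup hDbdd hmemD)
end

section
/- Let G be a compact group acting continuously by isometries on a metric space X, let N be a closed normal subgroup of G, and suppose there exists a point p ∈ X whose G-orbit coincides with its N-orbit, i.e., G·p = N·p. Then diam(X/G) ≥ (1/2) · diam(X/N). -/
/-- Let `G` be a compact group acting continuously by isometries on a metric space `X`,
let `N` be a closed normal subgroup of `G`, and suppose there is a point `p ∈ X` with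
`G·p = N·p`. Then `diam (X/G) ≥ (1/2) ⬝ diam (X/N)`, where for a group `H` acting on `X`,
`diam (X/H) = sup_{x,y} inf_{h ∈ H} d(x, h·y)`. -/
theorem quotient_diam_ge_half_of_common_orbit
    (G X : Type*) [Group G] [TopologicalSpace G] [IsTopologicalGroup G] [CompactSpace G]
    [MetricSpace X] [MulAction G X]
    (hcont : Continuous fun p : G × X => p.1 • p.2)
    (hisom : ∀ g : G, Isometry fun x : X => g • x)
    (N : Subgroup G) (hNnormal : N.Normal) (hNclosed : IsClosed (N : Set G))
    (p : X) (horbit : MulAction.orbit G p = MulAction.orbit N p) :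
    (⨆ x : X, ⨆ y : X, ⨅ h : N, edist x (h • y)) / 2 ≤
      ⨆ x : X, ⨆ y : X, ⨅ g : G, edist x (g • y) := by
  set D : ENNReal := ⨆ x : X, ⨆ y : X, ⨅ g : G, edist x (g • y) with hD
  have hsmul : ∀ (n : N) (x : X), n • x = (n : G) • x := fun n x => rfl
  have hedist : ∀ (g : G) (x y : X), edist (g • x) (g • y) = edist x y :=
    fun g x y => (hisom g).edist_eq x y
  -- Step 1: for every x, the N-distance from x to the orbit of p is ≤ D.
  have step1 : ∀ x : X, (⨅ n : N, edist x (n • p)) ≤ D := by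
    intro x
    have h1 : (⨅ n : N, edist x (n • p)) ≤ ⨅ g : G, edist x (g • p) := by
      refine le_iInf fun g => ?_
      have hg : g • p ∈ MulAction.orbit N p := by
        rw [← horbit]; exact ⟨g, rfl⟩
      obtain ⟨n, hn⟩ := hg
      calc (⨅ n : N, edist x (n • p)) ≤ edist x (n • p) := iInf_le _ n
        _ = edist x (g • p) := congrArg (edist x) hn
    refine h1.trans ?_
    exact le_trans (le_iSup (fun y => ⨅ g : G, edist x (g • y)) p)
      (le_iSup (fun x => ⨆ y : X, ⨅ g : G, edist x (g • y)) x)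
  -- symmetric version: distance from p to x
  have step1' : ∀ x : X, (⨅ n : N, edist p (n • x)) ≤ D := by
    intro x
    refine le_trans (le_iInf fun n => ?_) (step1 x)
    calc (⨅ m : N, edist p (m • x)) ≤ edist p (n⁻¹ • x) := iInf_le _ n⁻¹
      _ = edist ((n : G) • p) ((n : G) • ((n : G)⁻¹ • x)) := by
          rw [hedist, hsmul]; norm_cast
      _ = edist ((n : G) • p) x := by rw [smul_inv_smul]
      _ = edist x ((n : G) • p) := edist_comm _ _
      _ = edist x (n • p) := by rw [hsmul]
  -- Step 2: triangle inequality through p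
  have step2 : ∀ x y : X, (⨅ n : N, edist x (n • y)) ≤ D + D := by
    intro x y
    have key : ∀ n₁ n₂ : N, (⨅ n : N, edist x (n • y)) ≤ edist x (n₁ • p) + edist p (n₂ • y) := by
      intro n₁ n₂
      calc (⨅ n : N, edist x (n • y)) ≤ edist x ((n₁ * n₂) • y) := iInf_le _ (n₁ * n₂)
        _ ≤ edist x (n₁ • p) + edist (n₁ • p) ((n₁ * n₂) • y) := edist_triangle _ _ _
        _ = edist x (n₁ • p) + edist p (n₂ • y) := by
            congr 1
            rw [hsmul, hsmul, hsmul]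
            push_cast [mul_smul]
            exact hedist (n₁ : G) p ((n₂ : G) • y)
    have : (⨅ n : N, edist x (n • y)) ≤
        (⨅ n : N, edist x (n • p)) + (⨅ n : N, edist p (n • y)) := by
      rw [ENNReal.iInf_add]
      refine le_iInf fun n₁ => ?_
      rw [ENNReal.add_iInf]
      exact le_iInf fun n₂ => key n₁ n₂
    exact this.trans (add_le_add (step1 x) (step1' y))
  -- conclude
  have hsup : (⨆ x : X, ⨆ y : X, ⨅ h : N, edist x (h • y)) ≤ D * 2 := by
    rw [mul_two]
    exact iSup_le fun x => iSup_le fun y => step2 x y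
  exact ENNReal.div_le_of_le_mul hsup
end
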